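/- For binary rooted tree shapes T1 and T2 with the same number n of leaves, the minimum Robinson–Foulds distance over all bijective leaf labellings equals 4n − 2 − 2μ(T1, T2). -/

import Mathlib

/-- A rooted tree shape on a finite vertex type, given by a parent function.
The root is its own parent, and every vertex reaches the root by iterating
the parent function (this forbids cycles away from the root). -/
structure RTree where
  V : Type
  [fin : Fintype V]
  [deq : DecidableEq V]
  root : V
  parent : V → V
  parent_root : parent root = root
  reaches_root : ∀ v : V, ∃ n : ℕ, parent^[n] v = root

attribute [instance] RTree.fin RTree.deq

namespace RTree

/-- `u` is a descendant of `v` (every vertex is a descendant of itself). -/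
def Desc (T : RTree) (u v : T.V) : Prop := ∃ n : ℕ, T.parent^[n] u = v

/-- A leaf is a vertex with no children. -/
def IsLeaf (T : RTree) (v : T.V) : Prop := ∀ u : T.V, u ≠ v → T.parent u ≠ v

def leafSet (T : RTree) : Set T.V := {v | T.IsLeaf v}

/-- The size (number of leaves) of the tree. -/
noncomputable def nLeaves (T : RTree) : ℕ := T.leafSet.ncard

/-- The size of a vertex: the number of leaves of the subtree rooted at it. -/
noncomputable def sz (T : RTree) (v : T.V) : ℕ := {l | T.IsLeaf l ∧ T.Desc l v}.ncard

/-- Two vertices are incomparable if neither is an ancestor of the other. -/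
def Incomp (T : RTree) (u v : T.V) : Prop := ¬ T.Desc u v ∧ ¬ T.Desc v u

def children (T : RTree) (v : T.V) : Set T.V := {u | T.parent u = v ∧ u ≠ v}

/-- The number of vertices of the tree. -/
noncomputable def nVerts (T : RTree) : ℕ := Nat.card T.V

/-- A binary tree shape: every internal vertex has exactly two children. -/
def IsBinary (T : RTree) : Prop := ∀ v : T.V, ¬ T.IsLeaf v → (T.children v).ncard = 2

variable (T : RTree)

def clu (v : T.V) : Set T.V := {l | T.IsLeaf l ∧ T.Desc l v}

lemma sz_eq_ncard_clu (v : T.V) : T.sz v = (T.clu v).ncard := rfl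

@[refl] lemma desc_refl (u : T.V) : T.Desc u u := ⟨0, rfl⟩

lemma desc_trans {u v w : T.V} (h1 : T.Desc u v) (h2 : T.Desc v w) : T.Desc u w := by
  obtain ⟨a, ha⟩ := h1; obtain ⟨b, hb⟩ := h2
  exact ⟨b + a, by rw [Function.iterate_add_apply, ha, hb]⟩

lemma desc_parent (u : T.V) : T.Desc u (T.parent u) := ⟨1, rfl⟩

lemma root_iterate (k : ℕ) : T.parent^[k] T.root = T.root := by
  induction k with
  | zero => rfl
  | succ k ih => rw [Function.iterate_succ_apply', ih, T.parent_root]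

lemma desc_root (u : T.V) : T.Desc u T.root := T.reaches_root u

lemma desc_antisymm {u v : T.V} (h1 : T.Desc u v) (h2 : T.Desc v u) : u = v := by
  obtain ⟨a, ha⟩ := h1; obtain ⟨b, hb⟩ := h2
  rcases Nat.eq_zero_or_pos (b + a) with h | h
  · have : a = 0 := by omega
    subst this; exact ha
  · have hper : T.parent^[b + a] u = u := by
      rw [Function.iterate_add_apply, ha, hb]
    have hmul : ∀ k : ℕ, T.parent^[k * (b + a)] u = u := by
      intro k
      induction k with
      | zero => simp
      | succ k ih => rw [Nat.succ_mul, Function.iterate_add_apply, hper, ih]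
    obtain ⟨m, hm⟩ := T.reaches_root u
    have hroot : u = T.root := by
      set K := (m + 1) * (b + a) with hK
      have hKm : m ≤ K := by calc m ≤ (m+1)*1 := by omega
          _ ≤ (m+1)*(b+a) := by exact Nat.mul_le_mul_left _ h
      have h2' : T.parent^[K] u = T.root := by
        have hsplit : K = (K - m) + m := by omega
        rw [hsplit, Function.iterate_add_apply, hm, T.root_iterate]
      rw [← hmul (m + 1), h2']
    subst hroot
    rw [← ha, T.root_iterate]

lemma desc_comparable {l u v : T.V} (h1 : T.Desc l u) (h2 : T.Desc l v) :
    T.Desc u v ∨ T.Desc v u := by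
  obtain ⟨a, ha⟩ := h1; obtain ⟨b, hb⟩ := h2
  rcases le_total a b with h | h
  · left; exact ⟨b - a, by rw [← ha, ← Function.iterate_add_apply, Nat.sub_add_cancel h, hb]⟩
  · right; exact ⟨a - b, by rw [← hb, ← Function.iterate_add_apply, Nat.sub_add_cancel h, ha]⟩

lemma exists_child_of_desc {x v : T.V} (hd : T.Desc x v) (hne : x ≠ v) :
    ∃ c ∈ T.children v, T.Desc x c := by
  classical
  have h : ∃ k, T.parent^[k] x = v := hd
  set k0 := Nat.find h with hk0
  have hfind : T.parent^[k0] x = v := Nat.find_spec h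
  have hk0pos : k0 ≠ 0 := by
    intro h0; rw [h0] at hfind; exact hne hfind
  refine ⟨T.parent^[k0 - 1] x, ⟨?_, ?_⟩, ⟨k0 - 1, rfl⟩⟩
  · have h1 : T.parent (T.parent^[k0 - 1] x) = T.parent^[k0 - 1 + 1] x :=
      (Function.iterate_succ_apply' T.parent (k0-1) x).symm
    have h2 : k0 - 1 + 1 = k0 := by omega
    rw [h1, h2]; exact hfind
  · intro hc
    exact Nat.find_min h (by omega : k0 - 1 < k0) hc

lemma not_isLeaf_of_child {c v : T.V} (hc : c ∈ T.children v) : ¬ T.IsLeaf v :=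
  fun hl => hl c hc.2 hc.1

lemma isLeaf_iff_children_empty (v : T.V) : T.IsLeaf v ↔ T.children v = ∅ := by
  constructor
  · intro hl
    ext u; simp only [children, Set.mem_setOf_eq, Set.mem_empty_iff_false, iff_false]
    rintro ⟨hp, hne⟩; exact hl u hne hp
  · intro he u hne hp
    have : u ∈ T.children v := ⟨hp, hne⟩
    rw [he] at this; exact this

lemma children_antichain {c c' v : T.V} (hc : c ∈ T.children v) (hc' : c' ∈ T.children v)
    (hd : T.Desc c c') : c = c' := by
  obtain ⟨k, hk⟩ := hd
  rcases Nat.eq_zero_or_pos k with h0 | hpos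
  · rw [h0] at hk; exact hk
  · exfalso
    have : T.parent^[k - 1] v = c' := by
      have : k = (k - 1) + 1 := by omega
      rw [this, Function.iterate_add_apply] at hk
      simpa [hc.1] using hk
    have hdvc' : T.Desc v c' := ⟨k - 1, this⟩
    have hdc'v : T.Desc c' v := ⟨1, by simpa using hc'.1⟩
    have := T.desc_antisymm hdvc' hdc'v
    exact hc'.2 this.symm

lemma exists_leaf_desc (v : T.V) : ∃ l, T.IsLeaf l ∧ T.Desc l v := by
  classical
  set s : Finset T.V := Finset.univ.filter (fun x => T.Desc x v) with hs
  have hsne : s.Nonempty := ⟨v, by simp [hs, T.desc_refl]⟩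
  obtain ⟨u, hu, hmin⟩ := Finset.exists_min_image s
    (fun x => (Finset.univ.filter (fun y => T.Desc y x)).card) hsne
  have hud : T.Desc u v := by simpa [hs] using hu
  refine ⟨u, ?_, hud⟩
  by_contra hnl
  rw [isLeaf_iff_children_empty] at hnl
  have : ∃ c, c ∈ T.children u := by
    rcases Set.eq_empty_or_nonempty (T.children u) with h | h
    · exact absurd h hnl
    · exact h
  obtain ⟨c, hc⟩ := this
  have hcd : T.Desc c u := ⟨1, by simpa using hc.1⟩
  have hcs : c ∈ s := by simp [hs]; exact T.desc_trans hcd hud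
  have hsub : Finset.univ.filter (fun y => T.Desc y c) ⊂ Finset.univ.filter (fun y => T.Desc y u) := by
    constructor
    · intro y hy
      simp only [Finset.mem_filter, Finset.mem_univ, true_and] at *
      exact T.desc_trans hy hcd
    · intro hsub'
      have : u ∈ Finset.univ.filter (fun y => T.Desc y c) := by
        apply hsub'
        simp [T.desc_refl]
      simp only [Finset.mem_filter, Finset.mem_univ, true_and] at this
      have := T.desc_antisymm this hcd
      exact hc.2 this.symm
  have hlt := Finset.card_lt_card hsub
  have := hmin c hcs
  omega

lemma clu_nonempty (v : T.V) : (T.clu v).Nonempty := by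
  obtain ⟨l, hl, hd⟩ := T.exists_leaf_desc v
  exact ⟨l, hl, hd⟩

lemma clu_mono {u v : T.V} (h : T.Desc u v) : T.clu u ⊆ T.clu v :=
  fun l hl => ⟨hl.1, T.desc_trans hl.2 h⟩

lemma clu_finite (v : T.V) : (T.clu v).Finite := Set.toFinite _

lemma comparable_of_clu_inter {u v : T.V} (h : (T.clu u ∩ T.clu v).Nonempty) :
    T.Desc u v ∨ T.Desc v u := by
  obtain ⟨l, hlu, hlv⟩ := h
  exact T.desc_comparable hlu.2 hlv.2

lemma exists_witness_of_strict_desc (hb : T.IsBinary) {u v : T.V}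
    (hd : T.Desc u v) (hne : u ≠ v) : ∃ l ∈ T.clu v, l ∉ T.clu u := by
  obtain ⟨c, hc, hdc⟩ := T.exists_child_of_desc hd hne
  have hnl : ¬ T.IsLeaf v := T.not_isLeaf_of_child hc
  have h2 := hb v hnl
  obtain ⟨a, b, hab, habs⟩ := Set.ncard_eq_two.mp h2
  have : ∃ c', c' ∈ T.children v ∧ c' ≠ c := by
    rcases (by rw [habs] at hc; exact hc : c ∈ ({a, b} : Set T.V)) with h | h
    · exact ⟨b, by rw [habs]; simp, by rw [h]; exact hab.symm⟩
    · exact ⟨a, by rw [habs]; simp, by rw [h]; exact hab⟩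
  obtain ⟨c', hc', hne'⟩ := this
  obtain ⟨l, hl, hld⟩ := T.exists_leaf_desc c'
  refine ⟨l, ⟨hl, T.desc_trans hld ⟨1, by simpa using hc'.1⟩⟩, ?_⟩
  rintro ⟨-, hlu⟩
  have hlc : T.Desc l c := T.desc_trans hlu hdc
  rcases T.desc_comparable hld hlc with h | h
  · exact hne' (T.children_antichain hc' hc h)
  · exact hne' (T.children_antichain hc hc' h).symm

lemma sz_lt_of_strict_desc (hb : T.IsBinary) {u v : T.V}
    (hd : T.Desc u v) (hne : u ≠ v) : T.sz u < T.sz v := by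
  obtain ⟨l, hlv, hlu⟩ := T.exists_witness_of_strict_desc hb hd hne
  rw [sz_eq_ncard_clu, sz_eq_ncard_clu]
  exact Set.ncard_lt_ncard ⟨T.clu_mono hd, fun hsub => hlu (hsub hlv)⟩ (T.clu_finite v)

lemma clu_subset_iff (hb : T.IsBinary) {u v : T.V} :
    T.clu u ⊆ T.clu v ↔ T.Desc u v := by
  constructor
  · intro hsub
    obtain ⟨l, hl⟩ := T.clu_nonempty u
    rcases T.comparable_of_clu_inter ⟨l, hl, hsub hl⟩ with h | h
    · exact h
    · by_cases he : v = u
      · rw [he]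
      · obtain ⟨l', hl'u, hl'v⟩ := T.exists_witness_of_strict_desc hb h he
        exact absurd (hsub hl'u) hl'v
  · exact T.clu_mono

lemma clu_injective (hb : T.IsBinary) {u v : T.V} (h : T.clu u = T.clu v) : u = v := by
  have h1 : T.Desc u v := (T.clu_subset_iff hb).mp h.le
  have h2 : T.Desc v u := (T.clu_subset_iff hb).mp h.ge
  exact T.desc_antisymm h1 h2

lemma incomp_iff_clu_disjoint (hb : T.IsBinary) {u v : T.V} :
    T.Incomp u v ↔ T.clu u ∩ T.clu v = ∅ := by
  constructor
  · intro ⟨h1, h2⟩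
    rcases Set.eq_empty_or_nonempty (T.clu u ∩ T.clu v) with h | h
    · exact h
    · rcases T.comparable_of_clu_inter h with hh | hh
      · exact absurd hh h1
      · exact absurd hh h2
  · intro hemp
    constructor
    · intro hd
      obtain ⟨l, hl⟩ := T.clu_nonempty u
      exact Set.eq_empty_iff_forall_notMem.mp hemp l ⟨hl, T.clu_mono hd hl⟩
    · intro hd
      obtain ⟨l, hl⟩ := T.clu_nonempty v
      exact Set.eq_empty_iff_forall_notMem.mp hemp l ⟨T.clu_mono hd hl, hl⟩

lemma parent_ne_of_ne_root {u : T.V} (h : u ≠ T.root) : T.parent u ≠ u := by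
  intro hp
  obtain ⟨m, hm⟩ := T.reaches_root u
  have : ∀ k, T.parent^[k] u = u := by
    intro k; induction k with
    | zero => rfl
    | succ k ih => rw [Function.iterate_succ_apply', ih, hp]
  rw [this m] at hm; exact h hm

lemma card_verts (hb : T.IsBinary) : Fintype.card T.V + 1 = 2 * T.nLeaves := by
  classical
  set N := Fintype.card T.V with hN
  have hroot_mem : T.root ∈ (Finset.univ : Finset T.V) := Finset.mem_univ _
  have hcard_erase : (Finset.univ.erase T.root).card = N - 1 :=
    Finset.card_erase_of_mem hroot_mem
  have hfib := Finset.card_eq_sum_card_fiberwise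
    (f := T.parent) (s := Finset.univ.erase T.root) (t := Finset.univ)
    (fun x _ => Finset.mem_univ _)
  have hfiber_eq : ∀ v : T.V,
      (((Finset.univ.erase T.root).filter (fun u => T.parent u = v)) : Set T.V)
        = T.children v := by
    intro v
    ext u
    simp only [Finset.coe_filter, Finset.mem_erase, Finset.mem_univ, and_true,
      Set.mem_setOf_eq, children]
    constructor
    · rintro ⟨hur, hp⟩
      refine ⟨hp, ?_⟩
      intro huv
      apply T.parent_ne_of_ne_root hur
      rw [huv] at hp ⊢
      exact hp
    · rintro ⟨hp, huv⟩
      refine ⟨?_, hp⟩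
      intro hur
      rw [hur] at hp huv
      rw [T.parent_root] at hp
      exact huv hp
  have hsum : ∑ v : T.V, ((Finset.univ.erase T.root).filter (fun u => T.parent u = v)).card
      = ∑ v : T.V, (T.children v).ncard := by
    apply Finset.sum_congr rfl
    intro v _
    rw [← hfiber_eq v, Set.ncard_coe_finset]
  have hval : ∀ v : T.V, (T.children v).ncard = if T.IsLeaf v then 0 else 2 := by
    intro v
    by_cases h : T.IsLeaf v
    · simp [h, (T.isLeaf_iff_children_empty v).mp h]
    · simp [h, hb v h]
  have hsum2 : ∑ v : T.V, (T.children v).ncard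
      = 2 * (Finset.univ.filter (fun v => ¬ T.IsLeaf v)).card := by
    rw [Finset.sum_congr rfl (fun v _ => hval v)]
    rw [Finset.sum_ite, Finset.sum_const, Finset.sum_const]
    simp [mul_comm]
  have hleaf_card : T.nLeaves = (Finset.univ.filter (fun v => T.IsLeaf v)).card := by
    rw [nLeaves, ← Set.ncard_coe_finset]
    congr 1
    ext v; simp [leafSet]
  have hsplit : (Finset.univ.filter (fun v => T.IsLeaf v)).card
      + (Finset.univ.filter (fun v => ¬ T.IsLeaf v)).card = N := by
    simpa using Finset.card_filter_add_card_filter_not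
      (s := (Finset.univ : Finset T.V)) (p := fun v => T.IsLeaf v)
  have hNpos : 1 ≤ N := by
    rw [hN]; exact Fintype.card_pos_iff.mpr ⟨T.root⟩
  have key : N - 1 = 2 * (Finset.univ.filter (fun v => ¬ T.IsLeaf v)).card := by
    rw [← hcard_erase, hfib, hsum, hsum2]
  omega


end RTree

open Set in

lemma exists_bijOn_of_ncard_eq {α β : Type} [Nonempty β] {L1 : Set α} {L2 : Set β}
    (h1 : L1.Finite) (h2 : L2.Finite) (h : L1.ncard = L2.ncard) :
    ∃ f : α → β, Set.BijOn f L1 L2 := by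
  apply Set.Finite.exists_bijOn_of_encard_eq h1
  rw [h1.encard_eq_coe_toFinset_card, h2.encard_eq_coe_toFinset_card]
  rw [Set.ncard_eq_toFinset_card _ h1, Set.ncard_eq_toFinset_card _ h2] at h
  exact_mod_cast h

lemma key_lemma {α β : Type} [Nonempty β] :
    ∀ (k : ℕ) (S : Set (Set α × Set β)) (L1 : Set α) (L2 : Set β),
    S.Finite → S.ncard ≤ k → L1.Finite → L2.Finite → L1.ncard = L2.ncard →
    (∀ p ∈ S, p.1 ⊆ L1 ∧ p.2 ⊆ L2 ∧ p.1.ncard = p.2.ncard ∧ p.1.Nonempty) →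
    (∀ p ∈ S, ∀ q ∈ S, (p.1 ⊆ q.1 ↔ p.2 ⊆ q.2)) →
    (∀ p ∈ S, ∀ q ∈ S, (p.1 ∩ q.1 = ∅ ↔ p.2 ∩ q.2 = ∅)) →
    (∀ p ∈ S, ∀ q ∈ S, p.1 ⊆ q.1 ∨ q.1 ⊆ p.1 ∨ p.1 ∩ q.1 = ∅) →
    ∃ f : α → β, Set.BijOn f L1 L2 ∧ ∀ p ∈ S, f '' p.1 = p.2 := by
  intro k
  induction k with
  | zero =>
    intro S L1 L2 hSfin hSk hL1 hL2 hcard _ _ _ _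
    have hS : S = ∅ := (Set.ncard_eq_zero hSfin).mp (by omega)
    obtain ⟨f, hf⟩ := exists_bijOn_of_ncard_eq hL1 hL2 hcard
    exact ⟨f, hf, by simp [hS]⟩
  | succ k ih =>
    intro S L1 L2 hSfin hSk hL1 hL2 hcard hbasic hsub hdisj hlam
    classical
    rcases Set.eq_empty_or_nonempty S with hS | hSne
    · obtain ⟨f, hf⟩ := exists_bijOn_of_ncard_eq hL1 hL2 hcard
      exact ⟨f, hf, by simp [hS]⟩
    obtain ⟨p0, hp0S, hp0max'⟩ := Set.Finite.exists_maximalFor (fun p => p.1.ncard) S hSfin hSne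
    have hp0max : ∀ p ∈ S, p0.1.ncard ≤ p.1.ncard → p0.1.ncard = p.1.ncard :=
      fun p hp h => le_antisymm h (hp0max' hp h)
    obtain ⟨hp01, hp02, hp0c, hp0ne⟩ := hbasic p0 hp0S
    have hfin1 : ∀ p ∈ S, p.1.Finite := fun p hp => hL1.subset (hbasic p hp).1
    have hfin2 : ∀ p ∈ S, p.2.Finite := fun p hp => hL2.subset (hbasic p hp).2.1
    -- every other element is inside p0.1 or disjoint from it
    have hcases : ∀ p ∈ S, p.1 ⊆ p0.1 ∨ p.1 ∩ p0.1 = ∅ := by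
      intro p hp
      rcases hlam p hp p0 hp0S with h | h | h
      · exact Or.inl h
      · -- p0.1 ⊆ p.1, so by maximality p.1 = p0.1
        have hle : p0.1.ncard ≤ p.1.ncard := Set.ncard_le_ncard h (hfin1 p hp)
        have heq := hp0max p hp hle
        have : p.1 = p0.1 := by
          exact (Set.eq_of_subset_of_ncard_le h heq.ge (hfin1 p hp)).symm
        exact Or.inl this.le
      · exact Or.inr h
    set S' := S \ {p0} with hS'
    have hS'fin : S'.Finite := hSfin.subset Set.diff_subset
    have hS'card : S'.ncard ≤ k := by
      have h1 : S'.ncard = S.ncard - 1 := by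
        rw [hS']; exact Set.ncard_diff_singleton_of_mem hp0S
      have h2 : 1 ≤ S.ncard := (Set.ncard_pos hSfin).mpr hSne
      omega
    set Sin := {p ∈ S' | p.1 ⊆ p0.1} with hSin
    set Sout := {p ∈ S' | ¬ p.1 ⊆ p0.1} with hSout
    have hSinS : Sin ⊆ S := fun p hp => hp.1.1
    have hSoutS : Sout ⊆ S := fun p hp => hp.1.1
    have hout_disj : ∀ p ∈ Sout, p.1 ∩ p0.1 = ∅ ∧ p.2 ∩ p0.2 = ∅ := by
      intro p hp
      have h1 : p.1 ∩ p0.1 = ∅ := by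
        rcases hcases p (hSoutS hp) with h | h
        · exact absurd h hp.2
        · exact h
      exact ⟨h1, (hdisj p (hSoutS hp) p0 hp0S).mp h1⟩
    have hin_sub : ∀ p ∈ Sin, p.1 ⊆ p0.1 ∧ p.2 ⊆ p0.2 := by
      intro p hp
      exact ⟨hp.2, (hsub p (hSinS hp) p0 hp0S).mp hp.2⟩
    -- inner instance
    obtain ⟨fin_, hfinBij, hfinresp⟩ := ih Sin p0.1 p0.2
      (hS'fin.subset (fun p hp => hp.1))
      (le_trans (Set.ncard_le_ncard (fun p hp => hp.1) hS'fin) hS'card)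
      (hL1.subset hp01) (hL2.subset hp02) hp0c
      (fun p hp => ⟨(hin_sub p hp).1, (hin_sub p hp).2,
        (hbasic p (hSinS hp)).2.2.1, (hbasic p (hSinS hp)).2.2.2⟩)
      (fun p hp q hq => hsub p (hSinS hp) q (hSinS hq))
      (fun p hp q hq => hdisj p (hSinS hp) q (hSinS hq))
      (fun p hp q hq => hlam p (hSinS hp) q (hSinS hq))
    -- outer instance
    obtain ⟨fout, hfoutBij, hfoutresp⟩ := ih Sout (L1 \ p0.1) (L2 \ p0.2)
      (hS'fin.subset (fun p hp => hp.1))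
      (le_trans (Set.ncard_le_ncard (fun p hp => hp.1) hS'fin) hS'card)
      hL1.diff hL2.diff
      (by rw [Set.ncard_diff hp01 (hL1.subset hp01), Set.ncard_diff hp02 (hL2.subset hp02),
            hcard, hp0c])
      (fun p hp => ⟨
        fun x hx => ⟨(hbasic p (hSoutS hp)).1 hx,
          fun hx0 => Set.eq_empty_iff_forall_notMem.mp (hout_disj p hp).1 x ⟨hx, hx0⟩⟩,
        fun y hy => ⟨(hbasic p (hSoutS hp)).2.1 hy,
          fun hy0 => Set.eq_empty_iff_forall_notMem.mp (hout_disj p hp).2 y ⟨hy, hy0⟩⟩,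
        (hbasic p (hSoutS hp)).2.2.1, (hbasic p (hSoutS hp)).2.2.2⟩)
      (fun p hp q hq => hsub p (hSoutS hp) q (hSoutS hq))
      (fun p hp q hq => hdisj p (hSoutS hp) q (hSoutS hq))
      (fun p hp q hq => hlam p (hSoutS hp) q (hSoutS hq))
    refine ⟨fun x => if x ∈ p0.1 then fin_ x else fout x, ⟨?_, ?_, ?_⟩, ?_⟩
    · -- MapsTo
      intro x hx
      by_cases hx0 : x ∈ p0.1
      · simp only [hx0, if_pos]
        exact hp02 (hfinBij.mapsTo hx0)
      · simp only [hx0, if_neg, not_false_iff]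
        exact (hfoutBij.mapsTo ⟨hx, hx0⟩).1
    · -- InjOn
      intro x hx y hy hxy
      by_cases hx0 : x ∈ p0.1 <;> by_cases hy0 : y ∈ p0.1 <;>
        simp only [hx0, hy0, if_pos, if_neg, not_false_iff] at hxy
      · exact hfinBij.injOn hx0 hy0 hxy
      · exact absurd (hxy ▸ hfinBij.mapsTo hx0) (hfoutBij.mapsTo ⟨hy, hy0⟩).2
      · exact absurd (hxy ▸ hfoutBij.mapsTo ⟨hx, hx0⟩).2 (by simp [hfinBij.mapsTo hy0])
      · exact hfoutBij.injOn ⟨hx, hx0⟩ ⟨hy, hy0⟩ hxy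
    · -- SurjOn
      intro y hy
      by_cases hy0 : y ∈ p0.2
      · obtain ⟨x, hx, hfx⟩ := hfinBij.surjOn hy0
        exact ⟨x, hp01 hx, by simp only [hx, if_pos]; exact hfx⟩
      · obtain ⟨x, hx, hfx⟩ := hfoutBij.surjOn ⟨hy, hy0⟩
        exact ⟨x, hx.1, by simp only [hx.2, if_neg, not_false_iff]; exact hfx⟩
    · -- respects all pairs
      intro p hp
      rcases eq_or_ne p p0 with rfl | hne
      · have : ∀ x ∈ p.1, (if x ∈ p.1 then fin_ x else fout x) = fin_ x := by
          intro x hx; simp [hx]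
        rw [Set.image_congr this]
        exact hfinBij.image_eq
      · have hpS' : p ∈ S' := ⟨hp, hne⟩
        by_cases hin : p.1 ⊆ p0.1
        · have hpin : p ∈ Sin := ⟨hpS', hin⟩
          have : ∀ x ∈ p.1, (if x ∈ p0.1 then fin_ x else fout x) = fin_ x := by
            intro x hx; simp [hin hx]
          rw [Set.image_congr this]
          exact hfinresp p hpin
        · have hpout : p ∈ Sout := ⟨hpS', hin⟩
          have hd := (hout_disj p hpout).1
          have : ∀ x ∈ p.1, (if x ∈ p0.1 then fin_ x else fout x) = fout x := by
            intro x hx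
            have : x ∉ p0.1 := fun hx0 => Set.eq_empty_iff_forall_notMem.mp hd x ⟨hx, hx0⟩
            simp [this]
          rw [Set.image_congr this]
          exact hfoutresp p hpout



/-- A consistent cluster matching between two tree shapes: a set of pairs of
vertices in which each vertex occurs at most once, matched vertices root
subtrees with equally many leaves (M1), and incomparability is preserved in
both directions (M2). -/
def ConsistentMatching (T1 T2 : RTree) (M : Set (T1.V × T2.V)) : Prop :=
  (∀ p ∈ M, ∀ q ∈ M, (p.1 = q.1 ∨ p.2 = q.2) → p = q) ∧
  (∀ p ∈ M, T1.sz p.1 = T2.sz p.2) ∧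
  (∀ p ∈ M, ∀ q ∈ M, (T1.Incomp p.1 q.1 ↔ T2.Incomp p.2 q.2))

/-- The maximum cardinality of a consistent cluster matching. -/
noncomputable def mu (T1 T2 : RTree) : ℕ :=
  sSup {n | ∃ M : Set (T1.V × T2.V), ConsistentMatching T1 T2 M ∧ M.ncard = n}

/-- The set of clusters of a tree under a leaf labelling `φ`. -/
def clusterSet (T : RTree) {X : Type} (φ : T.V → X) : Set (Set X) :=
  {C | ∃ u : T.V, C = φ '' {l | T.IsLeaf l ∧ T.Desc l u}}

/-- The Robinson–Foulds distance of two labelled trees: the cardinality of the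
symmetric difference of their cluster sets. -/
noncomputable def dRF (T1 T2 : RTree) {X : Type} (φ1 : T1.V → X) (φ2 : T2.V → X) : ℕ :=
  ((clusterSet T1 φ1 \ clusterSet T2 φ2) ∪ (clusterSet T2 φ2 \ clusterSet T1 φ1)).ncard

/-- The extension of the Robinson–Foulds distance to tree shapes: the minimum
over all pairs of bijective leaf labellings by a common label set. -/
noncomputable def dRFstar (T1 T2 : RTree) : ℕ :=
  sInf {d | ∃ φ1 : T1.V → Fin T1.nLeaves, ∃ φ2 : T2.V → Fin T1.nLeaves,
    Set.BijOn φ1 T1.leafSet Set.univ ∧ Set.BijOn φ2 T2.leafSet Set.univ ∧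
    d = dRF T1 T2 φ1 φ2}

open Set

lemma clu_subset_leafSet (T : RTree) (u : T.V) : T.clu u ⊆ T.leafSet :=
  fun l hl => hl.1

lemma clusterSet_eq (T : RTree) {X : Type} (φ : T.V → X) :
    clusterSet T φ = (fun u => φ '' T.clu u) '' Set.univ := by
  ext C
  simp only [clusterSet, Set.mem_setOf_eq, Set.image_univ, Set.mem_range]
  exact ⟨fun ⟨u, hu⟩ => ⟨u, hu.symm⟩, fun ⟨u, hu⟩ => ⟨u, hu.symm⟩⟩

lemma clusterSet_finite (T : RTree) {X : Type} (φ : T.V → X) :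
    (clusterSet T φ).Finite := by
  rw [clusterSet_eq]
  exact Set.finite_univ.image _

lemma cmap_injOn (T : RTree) (hb : T.IsBinary) {X : Type} {φ : T.V → X}
    (hφ : Set.InjOn φ T.leafSet) :
    Function.Injective (fun u => φ '' T.clu u) := by
  intro u v h
  have := (hφ.image_eq_image_iff (clu_subset_leafSet T u) (clu_subset_leafSet T v)).mp h
  exact T.clu_injective hb this

lemma ncard_clusterSet (T : RTree) (hb : T.IsBinary) {X : Type} {φ : T.V → X}
    (hφ : Set.InjOn φ T.leafSet) :
    (clusterSet T φ).ncard = Fintype.card T.V := by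
  rw [clusterSet_eq, Set.ncard_image_of_injective _ (cmap_injOn T hb hφ),
    Set.ncard_univ, Nat.card_eq_fintype_card]

lemma mu_bddAbove (T1 T2 : RTree) :
    BddAbove {n | ∃ M : Set (T1.V × T2.V), ConsistentMatching T1 T2 M ∧ M.ncard = n} := by
  refine ⟨Fintype.card (T1.V × T2.V), ?_⟩
  rintro m ⟨M, -, rfl⟩
  calc M.ncard ≤ (Set.univ : Set (T1.V × T2.V)).ncard :=
        Set.ncard_le_ncard (Set.subset_univ _) Set.finite_univ
    _ = Fintype.card (T1.V × T2.V) := by rw [Set.ncard_univ, Nat.card_eq_fintype_card]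

lemma mu_set_nonempty (T1 T2 : RTree) :
    {n | ∃ M : Set (T1.V × T2.V), ConsistentMatching T1 T2 M ∧ M.ncard = n}.Nonempty := by
  refine ⟨0, ∅, ⟨?_, ?_, ?_⟩, Set.ncard_empty _⟩ <;> simp

lemma ncard_le_mu (T1 T2 : RTree) {M : Set (T1.V × T2.V)} (hM : ConsistentMatching T1 T2 M) :
    M.ncard ≤ mu T1 T2 :=
  le_csSup (mu_bddAbove T1 T2) ⟨M, hM, rfl⟩

lemma exists_mu_matching (T1 T2 : RTree) :
    ∃ M : Set (T1.V × T2.V), ConsistentMatching T1 T2 M ∧ M.ncard = mu T1 T2 :=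
  Nat.sSup_mem (mu_set_nonempty T1 T2) (mu_bddAbove T1 T2)

lemma matching_desc_iff (T1 T2 : RTree) (hb1 : T1.IsBinary) (hb2 : T2.IsBinary)
    {M : Set (T1.V × T2.V)} (hM : ConsistentMatching T1 T2 M)
    {p q : T1.V × T2.V} (hp : p ∈ M) (hq : q ∈ M) :
    (T1.Desc p.1 q.1 ↔ T2.Desc p.2 q.2) := by
  obtain ⟨hinj, hsz, hinc⟩ := hM
  rcases eq_or_ne p q with rfl | hne
  · simp [T1.desc_refl, T2.desc_refl]
  have hne1 : p.1 ≠ q.1 := fun h => hne (hinj p hp q hq (Or.inl h))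
  have hne2 : p.2 ≠ q.2 := fun h => hne (hinj p hp q hq (Or.inr h))
  constructor
  · intro hd
    have hlt : T1.sz p.1 < T1.sz q.1 := T1.sz_lt_of_strict_desc hb1 hd hne1
    have hni : ¬ T2.Incomp p.2 q.2 := by
      rw [← hinc p hp q hq]
      exact fun h => h.1 hd
    rcases not_and_or.mp hni with h | h
    · exact not_not.mp h
    · exfalso
      have := T2.sz_lt_of_strict_desc hb2 (not_not.mp h) hne2.symm
      rw [← hsz p hp, ← hsz q hq] at this
      omega
  · intro hd
    have hlt : T2.sz p.2 < T2.sz q.2 := T2.sz_lt_of_strict_desc hb2 hd hne2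
    have hni : ¬ T1.Incomp p.1 q.1 := by
      rw [hinc p hp q hq]
      exact fun h => h.1 hd
    rcases not_and_or.mp hni with h | h
    · exact not_not.mp h
    · exfalso
      have := T1.sz_lt_of_strict_desc hb1 (not_not.mp h) hne1.symm
      rw [hsz p hp, hsz q hq] at this
      omega

/-- Every pair of labellings gives at most `mu` common clusters. -/
lemma common_le_mu (T1 T2 : RTree) (hb1 : T1.IsBinary) (hb2 : T2.IsBinary)
    {φ1 : T1.V → Fin T1.nLeaves} {φ2 : T2.V → Fin T1.nLeaves}
    (hφ1 : Set.BijOn φ1 T1.leafSet Set.univ) (hφ2 : Set.BijOn φ2 T2.leafSet Set.univ) :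
    (clusterSet T1 φ1 ∩ clusterSet T2 φ2).ncard ≤ mu T1 T2 := by
  classical
  set M : Set (T1.V × T2.V) := {p | φ1 '' T1.clu p.1 = φ2 '' T2.clu p.2} with hMdef
  have himg1 : ∀ u, (φ1 '' T1.clu u).ncard = T1.sz u := fun u =>
    Set.ncard_image_of_injOn (hφ1.injOn.mono (clu_subset_leafSet T1 u))
  have himg2 : ∀ v, (φ2 '' T2.clu v).ncard = T2.sz v := fun v =>
    Set.ncard_image_of_injOn (hφ2.injOn.mono (clu_subset_leafSet T2 v))
  have hM : ConsistentMatching T1 T2 M := by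
    refine ⟨?_, ?_, ?_⟩
    · intro p hp q hq h
      rcases h with h | h
      · have h2 : φ2 '' T2.clu p.2 = φ2 '' T2.clu q.2 := by
          rw [← hp, ← hq, h]
        have := (hφ2.injOn.image_eq_image_iff (clu_subset_leafSet T2 _)
          (clu_subset_leafSet T2 _)).mp h2
        exact Prod.ext h (T2.clu_injective hb2 this)
      · have h2 : φ1 '' T1.clu p.1 = φ1 '' T1.clu q.1 := by
          rw [hp, hq, h]
        have := (hφ1.injOn.image_eq_image_iff (clu_subset_leafSet T1 _)
          (clu_subset_leafSet T1 _)).mp h2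
        exact Prod.ext (T1.clu_injective hb1 this) h
    · intro p hp
      rw [← himg1 p.1, ← himg2 p.2, hp]
    · intro p hp q hq
      rw [T1.incomp_iff_clu_disjoint hb1, T2.incomp_iff_clu_disjoint hb2]
      have e1 : T1.clu p.1 ∩ T1.clu q.1 = ∅ ↔ (φ1 '' T1.clu p.1) ∩ (φ1 '' T1.clu q.1) = ∅ := by
        rw [← hφ1.injOn.image_inter (clu_subset_leafSet T1 _) (clu_subset_leafSet T1 _)]
        simp [Set.image_eq_empty]
      have e2 : T2.clu p.2 ∩ T2.clu q.2 = ∅ ↔ (φ2 '' T2.clu p.2) ∩ (φ2 '' T2.clu q.2) = ∅ := by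
        rw [← hφ2.injOn.image_inter (clu_subset_leafSet T2 _) (clu_subset_leafSet T2 _)]
        simp [Set.image_eq_empty]
      rw [e1, e2, hp, hq]
  have hsub : clusterSet T1 φ1 ∩ clusterSet T2 φ2 ⊆ (fun p : T1.V × T2.V => φ1 '' T1.clu p.1) '' M := by
    rintro C ⟨⟨u, hu⟩, ⟨v, hv⟩⟩
    refine ⟨(u, v), ?_, hu.symm⟩
    show φ1 '' T1.clu u = φ2 '' T2.clu v
    simp only [RTree.clu]
    rw [← hu, ← hv]
  calc (clusterSet T1 φ1 ∩ clusterSet T2 φ2).ncard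
      ≤ ((fun p : T1.V × T2.V => φ1 '' T1.clu p.1) '' M).ncard :=
        Set.ncard_le_ncard hsub ((Set.toFinite M).image _)
    _ ≤ M.ncard := Set.ncard_image_le (Set.toFinite M)
    _ ≤ mu T1 T2 := ncard_le_mu T1 T2 hM

lemma dRF_eq (T1 T2 : RTree) (hb1 : T1.IsBinary) (hb2 : T2.IsBinary)
    {φ1 : T1.V → Fin T1.nLeaves} {φ2 : T2.V → Fin T1.nLeaves}
    (hφ1 : Set.BijOn φ1 T1.leafSet Set.univ) (hφ2 : Set.BijOn φ2 T2.leafSet Set.univ) :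
    dRF T1 T2 φ1 φ2 + 2 * (clusterSet T1 φ1 ∩ clusterSet T2 φ2).ncard
      = Fintype.card T1.V + Fintype.card T2.V := by
  set A := clusterSet T1 φ1
  set B := clusterSet T2 φ2
  have hA : A.Finite := clusterSet_finite T1 φ1
  have hB : B.Finite := clusterSet_finite T2 φ2
  have hdisj : Disjoint (A \ B) (B \ A) := by
    rw [Set.disjoint_left]
    rintro x ⟨-, hx⟩ ⟨hx', -⟩
    exact hx hx'
  have h1 : dRF T1 T2 φ1 φ2 = (A \ B).ncard + (B \ A).ncard :=
    Set.ncard_union_eq hdisj hA.diff hB.diff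
  have h2 := Set.ncard_inter_add_ncard_diff_eq_ncard A B hA
  have h3 := Set.ncard_inter_add_ncard_diff_eq_ncard B A hB
  have h4 : (B ∩ A).ncard = (A ∩ B).ncard := by rw [Set.inter_comm]
  have h5 : A.ncard = Fintype.card T1.V := ncard_clusterSet T1 hb1 hφ1.injOn
  have h6 : B.ncard = Fintype.card T2.V := ncard_clusterSet T2 hb2 hφ2.injOn
  omega

/-- There are labellings realizing at least `mu` common clusters. -/
lemma exists_good_labelling (T1 T2 : RTree) (hb1 : T1.IsBinary) (hb2 : T2.IsBinary)
    (h12 : T1.nLeaves = T2.nLeaves) :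
    ∃ (φ1 : T1.V → Fin T1.nLeaves) (φ2 : T2.V → Fin T1.nLeaves),
      Set.BijOn φ1 T1.leafSet Set.univ ∧ Set.BijOn φ2 T2.leafSet Set.univ ∧
      mu T1 T2 ≤ (clusterSet T1 φ1 ∩ clusterSet T2 φ2).ncard := by
  classical
  obtain ⟨M, hM, hMcard⟩ := exists_mu_matching T1 T2
  have hMinj := hM.1
  have hMsz := hM.2.1
  have hMinc := hM.2.2
  haveI : Nonempty T2.V := ⟨T2.root⟩
  haveI : Nonempty T1.V := ⟨T1.root⟩
  set S : Set (Set T1.V × Set T2.V) := (fun p : T1.V × T2.V => (T1.clu p.1, T2.clu p.2)) '' M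
    with hSdef
  obtain ⟨σ, hσ, hσresp⟩ := key_lemma S.ncard S T1.leafSet T2.leafSet
    ((Set.toFinite M).image _) le_rfl (Set.toFinite _) (Set.toFinite _) h12
    (by
      rintro p ⟨q, hq, rfl⟩
      exact ⟨clu_subset_leafSet T1 _, clu_subset_leafSet T2 _, hMsz q hq, T1.clu_nonempty _⟩)
    (by
      rintro p ⟨p', hp', rfl⟩ q ⟨q', hq', rfl⟩
      rw [T1.clu_subset_iff hb1, T2.clu_subset_iff hb2]
      exact matching_desc_iff T1 T2 hb1 hb2 hM hp' hq')
    (by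
      rintro p ⟨p', hp', rfl⟩ q ⟨q', hq', rfl⟩
      rw [← T1.incomp_iff_clu_disjoint hb1, ← T2.incomp_iff_clu_disjoint hb2]
      exact hMinc p' hp' q' hq')
    (by
      rintro p ⟨p', hp', rfl⟩ q ⟨q', hq', rfl⟩
      by_cases hd1 : T1.Desc p'.1 q'.1
      · exact Or.inl (T1.clu_mono hd1)
      by_cases hd2 : T1.Desc q'.1 p'.1
      · exact Or.inr (Or.inl (T1.clu_mono hd2))
      exact Or.inr (Or.inr ((T1.incomp_iff_clu_disjoint hb1).mp ⟨hd1, hd2⟩)))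
  haveI : Nonempty (Fin T1.nLeaves) := by
    have hpos : 0 < T1.nLeaves := by
      obtain ⟨l, hl, -⟩ := T1.exists_leaf_desc T1.root
      exact (Set.ncard_pos (Set.toFinite _)).mpr ⟨l, hl⟩
    exact ⟨⟨0, hpos⟩⟩
  obtain ⟨φ1, hφ1⟩ := exists_bijOn_of_ncard_eq (Set.toFinite T1.leafSet)
    (Set.finite_univ (α := Fin T1.nLeaves))
    (by rw [Set.ncard_univ, Nat.card_eq_fintype_card, Fintype.card_fin]; rfl)
  set τ : T2.V → T1.V := Function.invFunOn σ T1.leafSet with hτdef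
  have hinv : Set.InvOn τ σ T1.leafSet T2.leafSet := hσ.invOn_invFunOn
  have hτ : Set.BijOn τ T2.leafSet T1.leafSet := Set.BijOn.symm hinv.symm hσ
  set φ2 : T2.V → Fin T1.nLeaves := φ1 ∘ τ with hφ2def
  have hφ2 : Set.BijOn φ2 T2.leafSet Set.univ := hφ1.comp hτ
  have hresp : ∀ p ∈ M, φ1 '' T1.clu p.1 = φ2 '' T2.clu p.2 := by
    intro p hp
    have h1 : σ '' T1.clu p.1 = T2.clu p.2 := hσresp _ ⟨p, hp, rfl⟩
    have h2 : τ '' T2.clu p.2 = T1.clu p.1 := by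
      rw [← h1]
      exact Set.LeftInvOn.image_image' hinv.1 (clu_subset_leafSet T1 _)
    rw [hφ2def, Set.image_comp, h2]
  refine ⟨φ1, φ2, hφ1, hφ2, ?_⟩
  have hsub : (fun p : T1.V × T2.V => φ1 '' T1.clu p.1) '' M
      ⊆ clusterSet T1 φ1 ∩ clusterSet T2 φ2 := by
    rintro C ⟨p, hp, rfl⟩
    refine ⟨⟨p.1, rfl⟩, ⟨p.2, ?_⟩⟩
    show (fun p : T1.V × T2.V => φ1 '' T1.clu p.1) p = φ2 '' T2.clu p.2
    exact hresp p hp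
  have hinjg : Set.InjOn (fun p : T1.V × T2.V => φ1 '' T1.clu p.1) M := by
    intro p hp q hq h
    have := (hφ1.injOn.image_eq_image_iff (clu_subset_leafSet T1 _)
      (clu_subset_leafSet T1 _)).mp h
    exact hMinj p hp q hq (Or.inl (T1.clu_injective hb1 this))
  calc mu T1 T2 = M.ncard := hMcard.symm
    _ = ((fun p : T1.V × T2.V => φ1 '' T1.clu p.1) '' M).ncard :=
        (Set.ncard_image_of_injOn hinjg).symm
    _ ≤ (clusterSet T1 φ1 ∩ clusterSet T2 φ2).ncard :=
        Set.ncard_le_ncard hsub ((clusterSet_finite T1 φ1).inter_of_left _)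

/-- For two binary tree shapes with `n` leaves each, the minimum
Robinson–Foulds distance over all bijective leaf labellings equals
`4n - 2 - 2 μ(T1,T2)`. -/
theorem dRFstar_binary (T1 T2 : RTree) (n : ℕ)
    (hb1 : T1.IsBinary) (hb2 : T2.IsBinary)
    (h1 : T1.nLeaves = n) (h2 : T2.nLeaves = n) :
    dRFstar T1 T2 = 4 * n - 2 - 2 * mu T1 T2 := by
  classical
  have hNV1 : Fintype.card T1.V + 1 = 2 * n := by rw [← h1]; exact T1.card_verts hb1
  have hNV2 : Fintype.card T2.V + 1 = 2 * n := by rw [← h2]; exact T2.card_verts hb2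
  obtain ⟨φ1, φ2, hφ1, hφ2, hge⟩ := exists_good_labelling T1 T2 hb1 hb2 (by rw [h1, h2])
  have hle := common_le_mu T1 T2 hb1 hb2 hφ1 hφ2
  have hceq : (clusterSet T1 φ1 ∩ clusterSet T2 φ2).ncard = mu T1 T2 := le_antisymm hle hge
  have hdrf := dRF_eq T1 T2 hb1 hb2 hφ1 hφ2
  have hmu_le : mu T1 T2 ≤ Fintype.card T1.V := by
    rw [← hceq, ← ncard_clusterSet T1 hb1 hφ1.injOn]
    exact Set.ncard_le_ncard Set.inter_subset_left (clusterSet_finite T1 φ1)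
  have hmem : (4 * n - 2 - 2 * mu T1 T2)
      ∈ {d | ∃ ψ1 : T1.V → Fin T1.nLeaves, ∃ ψ2 : T2.V → Fin T1.nLeaves,
        Set.BijOn ψ1 T1.leafSet Set.univ ∧ Set.BijOn ψ2 T2.leafSet Set.univ ∧
        d = dRF T1 T2 ψ1 ψ2} := by
    exact ⟨φ1, φ2, hφ1, hφ2, by omega⟩
  have hlb : ∀ d ∈ {d | ∃ ψ1 : T1.V → Fin T1.nLeaves, ∃ ψ2 : T2.V → Fin T1.nLeaves,
        Set.BijOn ψ1 T1.leafSet Set.univ ∧ Set.BijOn ψ2 T2.leafSet Set.univ ∧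
        d = dRF T1 T2 ψ1 ψ2}, 4 * n - 2 - 2 * mu T1 T2 ≤ d := by
    rintro d ⟨ψ1, ψ2, hψ1, hψ2, rfl⟩
    have hd := dRF_eq T1 T2 hb1 hb2 hψ1 hψ2
    have hc := common_le_mu T1 T2 hb1 hb2 hψ1 hψ2
    omega
  exact le_antisymm (Nat.sInf_le hmem) (le_csInf ⟨_, hmem⟩ hlb)
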